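/- Theorem 1 (stability of trust-region policy updates): suppose there exists C > 0 such that ν(s) ≥ C for all s ∈ S. Let L ≥ 1, let π_old^{(1)}, …, π_old^{(L)} and π_new be policies, let δ > 0, and for each ℓ let m^{(ℓ)} be a probability mass function on S satisfying m^{(ℓ)}(s) ≥ (1−γ) ν(s) for all s ∈ S. If (1/L) Σ_{ℓ=1}^L Σ_{s∈S} m^{(ℓ)}(s) D_KL(π_old^{(ℓ)}(·|s), π_new(·|s)) ≤ δ, then |V(π_new) − (1/L) Σ_{ℓ=1}^L V(π_old^{(ℓ)})| ≤ K √δ, where K > 0 is a constant depending only on γ, C and R_max. -/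

import Mathlib

namespace VEPO

variable {S A : Type} [Fintype S] [Fintype A] [DecidableEq S] [DecidableEq A]

/-- A probability mass function on a finite type, represented as a real-valued function. -/
def IsPMF {X : Type} [Fintype X] (f : X → ℝ) : Prop :=
  (∀ x, 0 ≤ f x) ∧ ∑ x : X, f x = 1

/-- A transition kernel: for each action-state pair `(a, s)`, a pmf `p a s` on next states. -/
def IsKernel (p : A → S → S → ℝ) : Prop := ∀ a s, IsPMF (p a s)

/-- A policy: for each state `s`, a pmf `π s` on actions. -/
def IsPolicy (π : S → A → ℝ) : Prop := ∀ s, IsPMF (π s)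

/-- The `t`-step visitation probability `p_t^π(s' | a, s)`. -/
def visit (p : A → S → S → ℝ) (π : S → A → ℝ) : ℕ → A → S → S → ℝ
  | 0, _, s, s' => if s' = s then 1 else 0
  | 1, a, s, s' => p a s s'
  | (t + 2), a, s, s' =>
      ∑ s'' : S, visit p π (t + 1) a s s'' * ∑ a'' : A, π s'' a'' * p a'' s'' s'

/-- The Q-function `Q^π(a, s)`. -/
noncomputable def Qfun (p : A → S → S → ℝ) (r : S → A → ℝ) (γ : ℝ)
    (π : S → A → ℝ) (a : A) (s : S) : ℝ :=
  r s a + ∑' t : ℕ, γ ^ (t + 1) *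
    ∑ s' : S, visit p π (t + 1) a s s' * ∑ a' : A, π s' a' * r s' a'

/-- The value function `V^π(s)`. -/
noncomputable def Vfun (p : A → S → S → ℝ) (r : S → A → ℝ) (γ : ℝ)
    (π : S → A → ℝ) (s : S) : ℝ :=
  ∑ a : A, π s a * Qfun p r γ π a s

/-- The advantage function `A^π(a, s)`. -/
noncomputable def Adv (p : A → S → S → ℝ) (r : S → A → ℝ) (γ : ℝ)
    (π : S → A → ℝ) (a : A) (s : S) : ℝ :=
  Qfun p r γ π a s - Vfun p r γ π s

/-- The conditional discounted visitation probability `d^π(s' | a, s)`. -/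
noncomputable def dvisit (p : A → S → S → ℝ) (γ : ℝ) (π : S → A → ℝ)
    (s' : S) (a : A) (s : S) : ℝ :=
  (1 - γ) * ∑' t : ℕ, γ ^ t * visit p π t a s s'

/-- The integrated discounted visitation probability `d^{π,ν}(s')`. -/
noncomputable def dnu (p : A → S → S → ℝ) (γ : ℝ) (ν : S → ℝ)
    (π : S → A → ℝ) (s' : S) : ℝ :=
  ∑ s : S, ∑ a : A, π s a * ν s * dvisit p γ π s' a s

/-- The integrated value `V(π) = Σ_s ν(s) V^π(s)`. -/
noncomputable def IntV (p : A → S → S → ℝ) (r : S → A → ℝ) (γ : ℝ) (ν : S → ℝ)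
    (π : S → A → ℝ) : ℝ :=
  ∑ s : S, ν s * Vfun p r γ π s

/-- The first-order term `η₁(π₁, π₂)`. -/
noncomputable def eta1 (p : A → S → S → ℝ) (r : S → A → ℝ) (γ : ℝ) (ν : S → ℝ)
    (π₁ π₂ : S → A → ℝ) : ℝ :=
  ∑ a : A, ∑ s : S, π₁ s a * Adv p r γ π₂ a s * dnu p γ ν π₂ s

/-- The higher-order remainder `η₂(π₁, π₂)`. -/
noncomputable def eta2 (p : A → S → S → ℝ) (r : S → A → ℝ) (γ : ℝ) (ν : S → ℝ)
    (π₁ π₂ : S → A → ℝ) : ℝ :=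
  ∑ a : A, ∑ s : S, (π₁ s a - π₂ s a) * Adv p r γ π₂ a s *
    (dnu p γ ν π₁ s - dnu p γ ν π₂ s)

/-- Total variation distance between two pmfs on a finite type. -/
noncomputable def DTV {X : Type} [Fintype X] (μ₁ μ₂ : X → ℝ) : ℝ :=
  (1 / 2) * ∑ x : X, |μ₁ x - μ₂ x|

/-- Kullback–Leibler divergence between two pmfs on a finite type, valued in `EReal`
(equal to `⊤` if `μ₁` is not absolutely continuous w.r.t. `μ₂`). -/
noncomputable def DKL {X : Type} [Fintype X] (μ₁ μ₂ : X → ℝ) : EReal :=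
  ∑ x : X, (if μ₁ x = 0 then (0 : EReal)
    else if μ₂ x = 0 then (⊤ : EReal)
    else ((μ₁ x * Real.log (μ₁ x / μ₂ x) : ℝ) : EReal))

/-- Conditional discounted stationary probability ratio `ω^π(a', s'; a, s)`. -/
noncomputable def ratio (p : A → S → S → ℝ) (γ : ℝ) (pinf : A → S → ℝ)
    (π : S → A → ℝ) (a' : A) (s' : S) (a : A) (s : S) : ℝ :=
  (1 - γ) * ((if a' = a ∧ s' = s then 1 else 0) +
    ∑' t : ℕ, γ ^ (t + 1) * (π s' a' * visit p π (t + 1) a s s')) / pinf a' s'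

/-- Integrated discounted stationary probability ratio `ω^{π,ν}(a', s')`. -/
noncomputable def rationu (p : A → S → S → ℝ) (γ : ℝ) (pinf : A → S → ℝ) (ν : S → ℝ)
    (π : S → A → ℝ) (a' : A) (s' : S) : ℝ :=
  ∑ a : A, ∑ s : S, π s a * ν s * ratio p γ pinf π a' s' a s

/-- Marginal state distribution `p̄_t^{π,ν}` at time `t` when `S₀ ~ ν` and actions follow `π`. -/
def marg (p : A → S → S → ℝ) (π : S → A → ℝ) (ν : S → ℝ) : ℕ → S → ℝ
  | 0, s' => ν s'
  | (t + 1), s' => ∑ s : S, marg p π ν t s * ∑ a : A, π s a * p a s s'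

/-- Conditional discounted state–action visitation `q^π(a', s'; a, s)`. -/
noncomputable def qvisit (p : A → S → S → ℝ) (γ : ℝ) (π : S → A → ℝ)
    (a' : A) (s' : S) (a : A) (s : S) : ℝ :=
  (1 - γ) * ((if a' = a ∧ s' = s then 1 else 0) +
    ∑' t : ℕ, γ ^ (t + 1) * (π s' a' * visit p π (t + 1) a s s'))

/-- The estimating function `ψ(o) = ψ₁ + ψ₂(o) + ψ₃(o)` evaluated at a data tuple
`o = (s, a, rr, s')`, for nuisance functions `Ṽ = Vt`, `Ã = At`, `ω̃ = ωt`
(with `ωt a' s' a s = ω̃(a',s'; a,s)`) and `d̃ = dt` (with `dt s* a s = d̃(s* | a, s)`). -/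
noncomputable def psi (γ : ℝ) (ν : S → ℝ) (π πold : S → A → ℝ)
    (Vt : S → ℝ) (At : A → S → ℝ) (ωt : A → S → A → S → ℝ) (dt : S → A → S → ℝ)
    (s : S) (a : A) (rr : ℝ) (s' : S) : ℝ :=
  let dtnu : S → ℝ := fun sstar => ∑ a0 : A, ∑ s0 : S, πold s0 a0 * ν s0 * dt sstar a0 s0
  let ωtnu : A → S → ℝ := fun a1 s1 => ∑ a0 : A, ∑ s0 : S, πold s0 a0 * ν s0 * ωt a1 s1 a0 s0
  (∑ sstar : S, dtnu sstar * ∑ astar : A, π sstar astar * At astar sstar)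
  + (1 / (1 - γ)) * ∑ sstar : S, dtnu sstar * ∑ astar : A,
      (π sstar astar - πold sstar astar) * ωt a s astar sstar *
        (rr + γ * Vt s' - Vt s - At a s)
  + (ωtnu a s / (1 - γ)) * ∑ astar : A,
      (γ * ∑ a' : A, πold s' a' * ∑ sstar : S, dt sstar a' s' * π sstar astar * At astar sstar
       - ∑ sstar : S, dt sstar a s * π sstar astar * At astar sstar
       + (1 - γ) * π s astar * At astar s)

/-- The expectation `E[ψ(O)]` of the estimating function, where `(A₀, S₀) ~ p_∞`,
`S₁ | (A₀, S₀) ~ p(· | A₀, S₀)` and `E[R₀ | A₀, S₀] = r(S₀, A₀)`;  since `ψ` is affine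
in its reward argument with a coefficient not depending on `s'`, this finite sum is
exactly the expectation of `ψ(O)`. -/
noncomputable def Epsi (p : A → S → S → ℝ) (r : S → A → ℝ) (γ : ℝ) (ν : S → ℝ)
    (pinf : A → S → ℝ) (π πold : S → A → ℝ)
    (Vt : S → ℝ) (At : A → S → ℝ) (ωt : A → S → A → S → ℝ) (dt : S → A → S → ℝ) : ℝ :=
  ∑ a : A, ∑ s : S, pinf a s * ∑ s' : S, p a s s' *
    psi γ ν π πold Vt At ωt dt s a (r s a) s'


section Aux

variable {p : A → S → S → ℝ} {π : S → A → ℝ} {r : S → A → ℝ} {γ Rmax : ℝ}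

set_option linter.unusedSectionVars false

lemma visit_succ_succ (t : ℕ) (a : A) (s s' : S) :
    visit p π (t + 2) a s s' =
      ∑ s'' : S, visit p π (t + 1) a s s'' * ∑ a'' : A, π s'' a'' * p a'' s'' s' := rfl

lemma visit_one (a : A) (s s' : S) : visit p π 1 a s s' = p a s s' := rfl

lemma visit_nonneg (hp : IsKernel p) (hπ : IsPolicy π) :
    ∀ (t : ℕ) (a : A) (s s' : S), 0 ≤ visit p π t a s s' := by
  intro t
  induction t using Nat.strong_induction_on with
  | _ t ih =>
    match t with
    | 0 => intro a s s'; simp only [visit]; split <;> norm_num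
    | 1 => intro a s s'; exact (hp a s).1 s'
    | (t + 2) =>
      intro a s s'
      rw [visit_succ_succ]
      refine Finset.sum_nonneg fun s'' _ => mul_nonneg (ih (t+1) (by omega) a s s'')
        (Finset.sum_nonneg fun a'' _ => mul_nonneg ((hπ s'').1 a'') ((hp a'' s'').1 s'))

lemma visit_sum_one (hp : IsKernel p) (hπ : IsPolicy π) :
    ∀ (t : ℕ) (a : A) (s : S), ∑ s' : S, visit p π t a s s' = 1 := by
  intro t
  induction t using Nat.strong_induction_on with
  | _ t ih =>
    match t with
    | 0 => intro a s; simp [visit]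
    | 1 => intro a s; exact (hp a s).2
    | (t + 2) =>
      intro a s
      simp only [visit_succ_succ]
      rw [Finset.sum_comm]
      have h1 : ∀ s'' : S, ∑ s' : S, visit p π (t+1) a s s'' * ∑ a'' : A, π s'' a'' * p a'' s'' s'
          = visit p π (t+1) a s s'' := by
        intro s''
        rw [← Finset.mul_sum, Finset.sum_comm]
        have : ∀ a'' : A, ∑ s' : S, π s'' a'' * p a'' s'' s' = π s'' a'' := by
          intro a''; rw [← Finset.mul_sum, (hp a'' s'').2, mul_one]
        rw [Finset.sum_congr rfl fun a'' _ => this a'', (hπ s'').2, mul_one]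
      rw [Finset.sum_congr rfl fun s'' _ => h1 s'', ih (t+1) (by omega) a s]

lemma visit_back : ∀ (t : ℕ) (a : A) (s s' : S),
    visit p π (t + 2) a s s' =
      ∑ s₁ : S, p a s s₁ * ∑ a₁ : A, π s₁ a₁ * visit p π (t + 1) a₁ s₁ s' := by
  intro t
  induction t with
  | zero => intro a s s'; rfl
  | succ t ih =>
    intro a s s'
    have e1 : visit p π (t + 3) a s s' =
        ∑ s'' : S, visit p π (t + 2) a s s'' * ∑ a'' : A, π s'' a'' * p a'' s'' s' := rfl
    set K : S → ℝ := fun s'' => ∑ a'' : A, π s'' a'' * p a'' s'' s' with hK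
    set v : ℕ → A → S → S → ℝ := visit p π with hv
    calc visit p π (t + 1 + 2) a s s'
        = ∑ s'' : S, v (t + 2) a s s'' * K s'' := e1
      _ = ∑ s'' : S, ∑ s₁ : S, (p a s s₁ * ∑ a₁ : A, π s₁ a₁ * v (t + 1) a₁ s₁ s'') * K s'' := by
          refine Finset.sum_congr rfl fun s'' _ => ?_
          rw [ih a s s'', Finset.sum_mul]
      _ = ∑ s₁ : S, ∑ s'' : S, (p a s s₁ * ∑ a₁ : A, π s₁ a₁ * v (t + 1) a₁ s₁ s'') * K s'' :=
          Finset.sum_comm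
      _ = ∑ s₁ : S, p a s s₁ * ∑ a₁ : A, π s₁ a₁ * v (t + 2) a₁ s₁ s' := by
          refine Finset.sum_congr rfl fun s₁ _ => ?_
          have e3 : ∀ a₁ : A, v (t + 2) a₁ s₁ s' = ∑ s'' : S, v (t + 1) a₁ s₁ s'' * K s'' :=
            fun a₁ => visit_succ_succ t a₁ s₁ s'
          simp only [e3, Finset.mul_sum, Finset.sum_mul]
          rw [Finset.sum_comm]
          exact Finset.sum_congr rfl fun s'' _ => Finset.sum_congr rfl fun a₁ _ => by ring

/-- mean reward under the policy -/
noncomputable def rbar (r : S → A → ℝ) (π : S → A → ℝ) (s' : S) : ℝ :=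
  ∑ a' : A, π s' a' * r s' a'

/-- expected mean reward after `t` steps -/
noncomputable def Gg (p : A → S → S → ℝ) (r : S → A → ℝ) (π : S → A → ℝ)
    (t : ℕ) (a : A) (s : S) : ℝ :=
  ∑ s' : S, visit p π t a s s' * rbar r π s'

lemma Qfun_eq (a : A) (s : S) :
    Qfun p r γ π a s = r s a + ∑' t : ℕ, γ ^ (t + 1) * Gg p r π (t + 1) a s := rfl

lemma abs_rbar_le (hπ : IsPolicy π) (hr : ∀ s a, |r s a| ≤ Rmax) (s' : S) :
    |rbar r π s'| ≤ Rmax := by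
  calc |rbar r π s'| ≤ ∑ a' : A, |π s' a' * r s' a'| := Finset.abs_sum_le_sum_abs _ _
    _ ≤ ∑ a' : A, π s' a' * Rmax := by
        refine Finset.sum_le_sum fun a' _ => ?_
        rw [abs_mul, abs_of_nonneg ((hπ s').1 a')]
        exact mul_le_mul_of_nonneg_left (hr s' a') ((hπ s').1 a')
    _ = Rmax := by rw [← Finset.sum_mul, (hπ s').2, one_mul]

lemma abs_Gg_le (hp : IsKernel p) (hπ : IsPolicy π) (hr : ∀ s a, |r s a| ≤ Rmax)
    (t : ℕ) (a : A) (s : S) : |Gg p r π t a s| ≤ Rmax := by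
  calc |Gg p r π t a s| ≤ ∑ s' : S, |visit p π t a s s' * rbar r π s'| :=
        Finset.abs_sum_le_sum_abs _ _
    _ ≤ ∑ s' : S, visit p π t a s s' * Rmax := by
        refine Finset.sum_le_sum fun s' _ => ?_
        rw [abs_mul, abs_of_nonneg (visit_nonneg hp hπ t a s s')]
        exact mul_le_mul_of_nonneg_left (abs_rbar_le hπ hr s') (visit_nonneg hp hπ t a s s')
    _ = Rmax := by rw [← Finset.sum_mul, visit_sum_one hp hπ t a s, one_mul]

lemma Rmax_nonneg (hr : ∀ s a, |r s a| ≤ Rmax) [Nonempty S] [Nonempty A] : 0 ≤ Rmax :=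
  le_trans (abs_nonneg _) (hr (Classical.arbitrary S) (Classical.arbitrary A))

lemma summable_q [Nonempty S] [Nonempty A] (hp : IsKernel p) (hπ : IsPolicy π)
    (hr : ∀ s a, |r s a| ≤ Rmax) (hγ0 : 0 ≤ γ) (hγ1 : γ < 1) (a : A) (s : S) :
    Summable (fun t : ℕ => γ ^ (t + 1) * Gg p r π (t + 1) a s) := by
  refine Summable.of_norm_bounded
    ((summable_geometric_of_lt_one hγ0 hγ1).mul_left (Rmax * γ)) fun t => ?_
  rw [Real.norm_eq_abs, abs_mul, abs_pow, abs_of_nonneg hγ0]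
  calc γ ^ (t + 1) * |Gg p r π (t + 1) a s| ≤ γ ^ (t + 1) * Rmax :=
        mul_le_mul_of_nonneg_left (abs_Gg_le hp hπ hr _ a s) (pow_nonneg hγ0 _)
    _ = Rmax * γ * γ ^ t := by ring

lemma abs_tsum_q_le [Nonempty S] [Nonempty A] (hp : IsKernel p) (hπ : IsPolicy π)
    (hr : ∀ s a, |r s a| ≤ Rmax) (hγ0 : 0 ≤ γ) (hγ1 : γ < 1) (a : A) (s : S) :
    |∑' t : ℕ, γ ^ (t + 1) * Gg p r π (t + 1) a s| ≤ γ * Rmax / (1 - γ) := by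
  have h1 : ∀ t : ℕ, |γ ^ (t + 1) * Gg p r π (t + 1) a s| ≤ (Rmax * γ) * γ ^ t := by
    intro t
    rw [abs_mul, abs_pow, abs_of_nonneg hγ0]
    calc γ ^ (t + 1) * |Gg p r π (t + 1) a s| ≤ γ ^ (t + 1) * Rmax :=
          mul_le_mul_of_nonneg_left (abs_Gg_le hp hπ hr _ a s) (pow_nonneg hγ0 _)
      _ = Rmax * γ * γ ^ t := by ring
  have hs2 : Summable (fun t : ℕ => (Rmax * γ) * γ ^ t) :=
    (summable_geometric_of_lt_one hγ0 hγ1).mul_left _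
  calc |∑' t : ℕ, γ ^ (t + 1) * Gg p r π (t + 1) a s|
      ≤ ∑' t : ℕ, |γ ^ (t + 1) * Gg p r π (t + 1) a s| := by
        simpa only [Real.norm_eq_abs] using
          norm_tsum_le_tsum_norm (f := fun t : ℕ => γ ^ (t + 1) * Gg p r π (t + 1) a s)
            (by simpa only [Real.norm_eq_abs] using
              ((summable_q hp hπ hr hγ0 hγ1 a s).abs))
    _ ≤ ∑' t : ℕ, (Rmax * γ) * γ ^ t :=
        Summable.tsum_le_tsum h1 ((summable_q hp hπ hr hγ0 hγ1 a s).abs) hs2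
    _ = (Rmax * γ) * (1 - γ)⁻¹ := by
        rw [tsum_mul_left, tsum_geometric_of_lt_one hγ0 hγ1]
    _ = γ * Rmax / (1 - γ) := by ring

lemma abs_Qfun_le [Nonempty S] [Nonempty A] (hp : IsKernel p) (hπ : IsPolicy π)
    (hr : ∀ s a, |r s a| ≤ Rmax) (hγ0 : 0 ≤ γ) (hγ1 : γ < 1) (a : A) (s : S) :
    |Qfun p r γ π a s| ≤ Rmax / (1 - γ) := by
  rw [Qfun_eq]
  have h := abs_tsum_q_le hp hπ hr hγ0 hγ1 a s
  have hγ : 0 < 1 - γ := by linarith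
  have : Rmax + γ * Rmax / (1 - γ) = Rmax / (1 - γ) := by field_simp; ring
  calc |r s a + ∑' t : ℕ, γ ^ (t + 1) * Gg p r π (t + 1) a s|
      ≤ |r s a| + |∑' t : ℕ, γ ^ (t + 1) * Gg p r π (t + 1) a s| := abs_add_le _ _
    _ ≤ Rmax + γ * Rmax / (1 - γ) := add_le_add (hr s a) h
    _ = Rmax / (1 - γ) := this

lemma abs_Vfun_le [Nonempty S] [Nonempty A] (hp : IsKernel p) (hπ : IsPolicy π)
    (hr : ∀ s a, |r s a| ≤ Rmax) (hγ0 : 0 ≤ γ) (hγ1 : γ < 1) (s : S) :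
    |Vfun p r γ π s| ≤ Rmax / (1 - γ) := by
  calc |Vfun p r γ π s| ≤ ∑ a : A, |π s a * Qfun p r γ π a s| := Finset.abs_sum_le_sum_abs _ _
    _ ≤ ∑ a : A, π s a * (Rmax / (1 - γ)) := by
        refine Finset.sum_le_sum fun a _ => ?_
        rw [abs_mul, abs_of_nonneg ((hπ s).1 a)]
        exact mul_le_mul_of_nonneg_left (abs_Qfun_le hp hπ hr hγ0 hγ1 a s) ((hπ s).1 a)
    _ = Rmax / (1 - γ) := by rw [← Finset.sum_mul, (hπ s).2, one_mul]


lemma Gg_back (t : ℕ) (a : A) (s : S) :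
    Gg p r π (t + 2) a s = ∑ s₁ : S, p a s s₁ * ∑ a₁ : A, π s₁ a₁ * Gg p r π (t + 1) a₁ s₁ := by
  calc Gg p r π (t + 2) a s
      = ∑ s' : S, (∑ s₁ : S, p a s s₁ * ∑ a₁ : A, π s₁ a₁ * visit p π (t + 1) a₁ s₁ s') *
          rbar r π s' := by
        refine Finset.sum_congr rfl fun s' _ => ?_
        rw [visit_back t a s s']
    _ = ∑ s₁ : S, p a s s₁ * ∑ a₁ : A, π s₁ a₁ *
          ∑ s' : S, visit p π (t + 1) a₁ s₁ s' * rbar r π s' := by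
        simp only [Finset.sum_mul, Finset.mul_sum]
        rw [Finset.sum_comm]
        refine Finset.sum_congr rfl fun s₁ _ => ?_
        rw [Finset.sum_comm]
        exact Finset.sum_congr rfl fun a₁ _ => Finset.sum_congr rfl fun s' _ => by ring
    _ = ∑ s₁ : S, p a s s₁ * ∑ a₁ : A, π s₁ a₁ * Gg p r π (t + 1) a₁ s₁ := rfl

lemma Qfun_bellman [Nonempty S] [Nonempty A] (hp : IsKernel p) (hπ : IsPolicy π)
    (hr : ∀ s a, |r s a| ≤ Rmax) (hγ0 : 0 ≤ γ) (hγ1 : γ < 1) (a : A) (s : S) :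
    Qfun p r γ π a s = r s a + γ * ∑ s₁ : S, p a s s₁ * Vfun p r γ π s₁ := by
  have hsum : ∀ (a₁ : A) (s₁ : S),
      Summable (fun t : ℕ => γ ^ (t + 1) * Gg p r π (t + 1) a₁ s₁) :=
    fun a₁ s₁ => summable_q hp hπ hr hγ0 hγ1 a₁ s₁
  have etail : ∀ t : ℕ, γ ^ (t + 1 + 1) * Gg p r π (t + 1 + 1) a s
      = ∑ s₁ : S, p a s s₁ * ∑ a₁ : A, π s₁ a₁ * (γ * (γ ^ (t + 1) * Gg p r π (t + 1) a₁ s₁)) := by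
    intro t
    rw [show t + 1 + 1 = t + 2 from rfl, Gg_back t a s]
    simp only [Finset.mul_sum]
    exact Finset.sum_congr rfl fun s₁ _ => Finset.sum_congr rfl fun a₁ _ => by ring
  have hsum2 : ∀ s₁ ∈ Finset.univ (α := S), Summable (fun t : ℕ =>
      p a s s₁ * ∑ a₁ : A, π s₁ a₁ * (γ * (γ ^ (t + 1) * Gg p r π (t + 1) a₁ s₁))) := by
    intro s₁ _
    refine Summable.mul_left _ (summable_sum fun a₁ _ => ?_)
    exact (((hsum a₁ s₁).mul_left γ).mul_left (π s₁ a₁))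
  have etsum : ∀ (a₁ : A) (s₁ : S), ∑' t : ℕ, γ ^ (t + 1) * Gg p r π (t + 1) a₁ s₁
      = Qfun p r γ π a₁ s₁ - r s₁ a₁ := by
    intro a₁ s₁; rw [Qfun_eq]; ring
  rw [Qfun_eq, (hsum a s).tsum_eq_zero_add, tsum_congr etail, Summable.tsum_finsetSum hsum2]
  have hper : ∀ s₁ : S, (∑' t : ℕ,
      p a s s₁ * ∑ a₁ : A, π s₁ a₁ * (γ * (γ ^ (t + 1) * Gg p r π (t + 1) a₁ s₁)))
      = p a s s₁ * (γ * (Vfun p r γ π s₁ - rbar r π s₁)) := by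
    intro s₁
    rw [tsum_mul_left, Summable.tsum_finsetSum (f := fun a₁ t =>
      π s₁ a₁ * (γ * (γ ^ (t + 1) * Gg p r π (t + 1) a₁ s₁)))
      (fun a₁ _ => ((hsum a₁ s₁).mul_left γ).mul_left (π s₁ a₁))]
    have : ∀ a₁ : A, (∑' t : ℕ, π s₁ a₁ * (γ * (γ ^ (t + 1) * Gg p r π (t + 1) a₁ s₁)))
        = π s₁ a₁ * (γ * (Qfun p r γ π a₁ s₁ - r s₁ a₁)) := by
      intro a₁
      rw [tsum_mul_left, tsum_mul_left, etsum a₁ s₁]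
    rw [Finset.sum_congr rfl fun a₁ _ => this a₁]
    have : ∑ a₁ : A, π s₁ a₁ * (γ * (Qfun p r γ π a₁ s₁ - r s₁ a₁))
        = γ * (Vfun p r γ π s₁ - rbar r π s₁) := by
      rw [Vfun, rbar, ← Finset.sum_sub_distrib, Finset.mul_sum]
      exact Finset.sum_congr rfl fun a₁ _ => by ring
    rw [this]
  rw [Finset.sum_congr rfl fun s₁ _ => hper s₁]
  have e0 : γ ^ (0 + 1) * Gg p r π (0 + 1) a s = γ * ∑ s₁ : S, p a s s₁ * rbar r π s₁ := by
    simp only [Nat.zero_add, pow_one, Gg, visit_one]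
  rw [e0]
  have : γ * (∑ s₁ : S, p a s s₁ * rbar r π s₁)
      + ∑ s₁ : S, p a s s₁ * (γ * (Vfun p r γ π s₁ - rbar r π s₁))
      = γ * ∑ s₁ : S, p a s s₁ * Vfun p r γ π s₁ := by
    rw [Finset.mul_sum, Finset.mul_sum, ← Finset.sum_add_distrib]
    exact Finset.sum_congr rfl fun s₁ _ => by ring
  linarith [this]

lemma Vfun_bellman [Nonempty S] [Nonempty A] (hp : IsKernel p) (hπ : IsPolicy π)
    (hr : ∀ s a, |r s a| ≤ Rmax) (hγ0 : 0 ≤ γ) (hγ1 : γ < 1) (s : S) :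
    Vfun p r γ π s = ∑ a : A, π s a * (r s a + γ * ∑ s₁ : S, p a s s₁ * Vfun p r γ π s₁) := by
  rw [Vfun]
  exact Finset.sum_congr rfl fun a _ => by rw [Qfun_bellman hp hπ hr hγ0 hγ1 a s]

lemma Vfun_diff_bound [Nonempty S] [Nonempty A] {π₁ π₂ : S → A → ℝ}
    (hp : IsKernel p) (hπ₁ : IsPolicy π₁) (hπ₂ : IsPolicy π₂)
    (hr : ∀ s a, |r s a| ≤ Rmax) (hγ0 : 0 ≤ γ) (hγ1 : γ < 1)
    (ε : ℝ) (hε : ∀ s, ∑ a : A, |π₁ s a - π₂ s a| ≤ ε) :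
    ∀ s : S, |Vfun p r γ π₁ s - Vfun p r γ π₂ s| ≤ ε * Rmax / (1 - γ) ^ 2 := by
  have h1γ : (0 : ℝ) < 1 - γ := by linarith
  have hRm : 0 ≤ Rmax := Rmax_nonneg hr
  set V₁ := Vfun p r γ π₁ with hV₁
  set V₂ := Vfun p r γ π₂ with hV₂
  have hne : (Finset.univ : Finset S).Nonempty := Finset.univ_nonempty
  set M := Finset.univ.sup' hne (fun s : S => |V₁ s - V₂ s|) with hM
  have hMle : ∀ s : S, |V₁ s - V₂ s| ≤ M :=
    fun s => Finset.le_sup' (fun s : S => |V₁ s - V₂ s|) (Finset.mem_univ s)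
  have hM0 : 0 ≤ M := le_trans (abs_nonneg _) (hMle (Classical.arbitrary S))
  have key : ∀ s : S, |V₁ s - V₂ s| ≤ ε * (Rmax / (1 - γ)) + γ * M := by
    intro s
    have b1 : V₁ s - V₂ s = ∑ a : A,
        ((π₁ s a - π₂ s a) * (r s a + γ * ∑ s₁ : S, p a s s₁ * V₂ s₁)
          + π₁ s a * (γ * ∑ s₁ : S, p a s s₁ * (V₁ s₁ - V₂ s₁))) := by
      rw [hV₁, hV₂, Vfun_bellman hp hπ₁ hr hγ0 hγ1 s, Vfun_bellman hp hπ₂ hr hγ0 hγ1 s,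
        ← Finset.sum_sub_distrib]
      refine Finset.sum_congr rfl fun a _ => ?_
      have hsub : ∑ s₁ : S, p a s s₁ * (Vfun p r γ π₁ s₁ - Vfun p r γ π₂ s₁)
          = (∑ s₁ : S, p a s s₁ * Vfun p r γ π₁ s₁)
            - ∑ s₁ : S, p a s s₁ * Vfun p r γ π₂ s₁ := by
        rw [← Finset.sum_sub_distrib]
        exact Finset.sum_congr rfl fun s₁ _ => by ring
      rw [hsub]; ring
    have hX : ∀ a : A, |r s a + γ * ∑ s₁ : S, p a s s₁ * V₂ s₁| ≤ Rmax / (1 - γ) := by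
      intro a
      have h2 : |∑ s₁ : S, p a s s₁ * V₂ s₁| ≤ Rmax / (1 - γ) := by
        calc |∑ s₁ : S, p a s s₁ * V₂ s₁| ≤ ∑ s₁ : S, |p a s s₁ * V₂ s₁| :=
              Finset.abs_sum_le_sum_abs _ _
          _ ≤ ∑ s₁ : S, p a s s₁ * (Rmax / (1 - γ)) := by
              refine Finset.sum_le_sum fun s₁ _ => ?_
              rw [abs_mul, abs_of_nonneg ((hp a s).1 s₁)]
              exact mul_le_mul_of_nonneg_left (abs_Vfun_le hp hπ₂ hr hγ0 hγ1 s₁) ((hp a s).1 s₁)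
          _ = Rmax / (1 - γ) := by rw [← Finset.sum_mul, (hp a s).2, one_mul]
      have habs : |r s a + γ * ∑ s₁ : S, p a s s₁ * V₂ s₁|
          ≤ |r s a| + γ * |∑ s₁ : S, p a s s₁ * V₂ s₁| := by
        calc |r s a + γ * ∑ s₁ : S, p a s s₁ * V₂ s₁|
            ≤ |r s a| + |γ * ∑ s₁ : S, p a s s₁ * V₂ s₁| := abs_add_le _ _
          _ = |r s a| + γ * |∑ s₁ : S, p a s s₁ * V₂ s₁| := by
              rw [abs_mul, abs_of_nonneg hγ0]
      have h3 : |r s a| + γ * |∑ s₁ : S, p a s s₁ * V₂ s₁| ≤ Rmax + γ * (Rmax / (1 - γ)) :=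
        add_le_add (hr s a) (mul_le_mul_of_nonneg_left h2 hγ0)
      have heq : Rmax + γ * (Rmax / (1 - γ)) = Rmax / (1 - γ) := by field_simp; ring
      linarith
    have hY : ∀ a : A, |∑ s₁ : S, p a s s₁ * (V₁ s₁ - V₂ s₁)| ≤ M := by
      intro a
      calc |∑ s₁ : S, p a s s₁ * (V₁ s₁ - V₂ s₁)|
          ≤ ∑ s₁ : S, |p a s s₁ * (V₁ s₁ - V₂ s₁)| := Finset.abs_sum_le_sum_abs _ _
        _ ≤ ∑ s₁ : S, p a s s₁ * M := by
            refine Finset.sum_le_sum fun s₁ _ => ?_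
            rw [abs_mul, abs_of_nonneg ((hp a s).1 s₁)]
            exact mul_le_mul_of_nonneg_left (hMle s₁) ((hp a s).1 s₁)
        _ = M := by rw [← Finset.sum_mul, (hp a s).2, one_mul]
    rw [b1]
    calc |∑ a : A, ((π₁ s a - π₂ s a) * (r s a + γ * ∑ s₁ : S, p a s s₁ * V₂ s₁)
            + π₁ s a * (γ * ∑ s₁ : S, p a s s₁ * (V₁ s₁ - V₂ s₁)))|
        ≤ ∑ a : A, |(π₁ s a - π₂ s a) * (r s a + γ * ∑ s₁ : S, p a s s₁ * V₂ s₁)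
            + π₁ s a * (γ * ∑ s₁ : S, p a s s₁ * (V₁ s₁ - V₂ s₁))| :=
          Finset.abs_sum_le_sum_abs _ _
      _ ≤ ∑ a : A, (|π₁ s a - π₂ s a| * (Rmax / (1 - γ)) + π₁ s a * (γ * M)) := by
          refine Finset.sum_le_sum fun a _ => ?_
          refine (abs_add_le _ _).trans (add_le_add ?_ ?_)
          · rw [abs_mul]
            exact mul_le_mul_of_nonneg_left (hX a) (abs_nonneg _)
          · rw [abs_mul, abs_of_nonneg ((hπ₁ s).1 a), abs_mul, abs_of_nonneg hγ0]
            exact mul_le_mul_of_nonneg_left (mul_le_mul_of_nonneg_left (hY a) hγ0) ((hπ₁ s).1 a)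
      _ = (∑ a : A, |π₁ s a - π₂ s a|) * (Rmax / (1 - γ)) + γ * M := by
          rw [Finset.sum_add_distrib, ← Finset.sum_mul, ← Finset.sum_mul, (hπ₁ s).2, one_mul]
      _ ≤ ε * (Rmax / (1 - γ)) + γ * M := by
          refine add_le_add (mul_le_mul_of_nonneg_right (hε s) (by positivity)) le_rfl
  obtain ⟨s₀, -, hs₀⟩ := Finset.exists_mem_eq_sup' hne (fun s : S => |V₁ s - V₂ s|)
  have hMkey : M ≤ ε * (Rmax / (1 - γ)) + γ * M :=
    le_of_eq_of_le (hM.trans hs₀) (key s₀)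
  have h2 : M * (1 - γ) ≤ ε * (Rmax / (1 - γ)) := by nlinarith
  intro s
  refine (hMle s).trans ?_
  rw [le_div_iff₀ (by positivity)]
  calc M * (1 - γ) ^ 2 = (M * (1 - γ)) * (1 - γ) := by ring
    _ ≤ (ε * (Rmax / (1 - γ))) * (1 - γ) := mul_le_mul_of_nonneg_right h2 h1γ.le
    _ = ε * Rmax := by field_simp


end Aux

/-- real-valued KL divergence -/
noncomputable def RKL {X : Type} [Fintype X] (μ₁ μ₂ : X → ℝ) : ℝ :=
  ∑ x : X, (if μ₁ x = 0 then 0 else μ₁ x * Real.log (μ₁ x / μ₂ x))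

/-- pointwise Hellinger-type lower bound on KL summands -/
lemma hellinger_pointwise {x y : ℝ} (hx : 0 ≤ x) (hy : 0 ≤ y) (h : y = 0 → x = 0) :
    (Real.sqrt x - Real.sqrt y) ^ 2 ≤
      (if x = 0 then 0 else x * Real.log (x / y)) - x + y := by
  by_cases hx0 : x = 0
  · subst hx0
    simp [Real.sq_sqrt hy]
  · have hxpos : 0 < x := lt_of_le_of_ne hx (Ne.symm hx0)
    have hypos : 0 < y := lt_of_le_of_ne hy (fun h' => hx0 (h h'.symm))
    rw [if_neg hx0]
    have hsx : 0 < Real.sqrt x := Real.sqrt_pos.mpr hxpos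
    have hsy : 0 < Real.sqrt y := Real.sqrt_pos.mpr hypos
    have hlog : Real.log (Real.sqrt y / Real.sqrt x) ≤ Real.sqrt y / Real.sqrt x - 1 :=
      Real.log_le_sub_one_of_pos (by positivity)
    have hlogeq : Real.log (x / y) = -2 * Real.log (Real.sqrt y / Real.sqrt x) := by
      rw [Real.log_div hsy.ne' hsx.ne', Real.log_sqrt hy, Real.log_sqrt hx,
        Real.log_div hx0 hypos.ne']
      ring
    have hxx : Real.sqrt x * Real.sqrt x = x := Real.mul_self_sqrt hx
    have hyy : Real.sqrt y * Real.sqrt y = y := Real.mul_self_sqrt hy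
    have h1 : x * Real.log (x / y) ≥ x * (2 - 2 * (Real.sqrt y / Real.sqrt x)) := by
      rw [hlogeq]
      have := mul_le_mul_of_nonneg_left hlog hx
      nlinarith
    have h2 : x * (Real.sqrt y / Real.sqrt x) = Real.sqrt x * Real.sqrt y := by
      field_simp
      nlinarith
    nlinarith



lemma sum_hellinger_le {X : Type} [Fintype X] {μ₁ μ₂ : X → ℝ}
    (h₁ : IsPMF μ₁) (h₂ : IsPMF μ₂) (hac : ∀ x, μ₂ x = 0 → μ₁ x = 0) :
    ∑ x : X, (Real.sqrt (μ₁ x) - Real.sqrt (μ₂ x)) ^ 2 ≤ RKL μ₁ μ₂ := by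
  have hre : RKL μ₁ μ₂ = ∑ x : X,
      ((if μ₁ x = 0 then 0 else μ₁ x * Real.log (μ₁ x / μ₂ x)) - μ₁ x + μ₂ x) := by
    rw [RKL, Finset.sum_add_distrib, Finset.sum_sub_distrib, h₁.2, h₂.2]
    ring
  rw [hre]
  exact Finset.sum_le_sum fun x _ => hellinger_pointwise (h₁.1 x) (h₂.1 x) (hac x)

lemma RKL_nonneg {X : Type} [Fintype X] {μ₁ μ₂ : X → ℝ}
    (h₁ : IsPMF μ₁) (h₂ : IsPMF μ₂) (hac : ∀ x, μ₂ x = 0 → μ₁ x = 0) :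
    0 ≤ RKL μ₁ μ₂ :=
  le_trans (Finset.sum_nonneg fun x _ => sq_nonneg _) (sum_hellinger_le h₁ h₂ hac)

lemma DTV_le_sqrt_RKL {X : Type} [Fintype X] {μ₁ μ₂ : X → ℝ}
    (h₁ : IsPMF μ₁) (h₂ : IsPMF μ₂) (hac : ∀ x, μ₂ x = 0 → μ₁ x = 0) :
    DTV μ₁ μ₂ ≤ Real.sqrt (RKL μ₁ μ₂) := by
  have hpt : ∀ x : X, |μ₁ x - μ₂ x| =
      |Real.sqrt (μ₁ x) - Real.sqrt (μ₂ x)| * (Real.sqrt (μ₁ x) + Real.sqrt (μ₂ x)) := by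
    intro x
    have e1 : Real.sqrt (μ₁ x) * Real.sqrt (μ₁ x) = μ₁ x := Real.mul_self_sqrt (h₁.1 x)
    have e2 : Real.sqrt (μ₂ x) * Real.sqrt (μ₂ x) = μ₂ x := Real.mul_self_sqrt (h₂.1 x)
    have : μ₁ x - μ₂ x = (Real.sqrt (μ₁ x) - Real.sqrt (μ₂ x)) *
        (Real.sqrt (μ₁ x) + Real.sqrt (μ₂ x)) := by nlinarith
    rw [this, abs_mul, abs_of_nonneg (show (0:ℝ) ≤ Real.sqrt (μ₁ x) + Real.sqrt (μ₂ x) by positivity)]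
  have hCS := Finset.sum_mul_sq_le_sq_mul_sq Finset.univ
    (fun x : X => |Real.sqrt (μ₁ x) - Real.sqrt (μ₂ x)|)
    (fun x : X => Real.sqrt (μ₁ x) + Real.sqrt (μ₂ x))
  have hd2 : ∑ x : X, |Real.sqrt (μ₁ x) - Real.sqrt (μ₂ x)| ^ 2 ≤ RKL μ₁ μ₂ := by
    refine le_trans (le_of_eq ?_) (sum_hellinger_le h₁ h₂ hac)
    exact Finset.sum_congr rfl fun x _ => sq_abs _
  have hs2 : ∑ x : X, (Real.sqrt (μ₁ x) + Real.sqrt (μ₂ x)) ^ 2 ≤ 4 := by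
    have : ∀ x : X, (Real.sqrt (μ₁ x) + Real.sqrt (μ₂ x)) ^ 2 ≤ 2 * (μ₁ x + μ₂ x) := by
      intro x
      have e1 : Real.sqrt (μ₁ x) * Real.sqrt (μ₁ x) = μ₁ x := Real.mul_self_sqrt (h₁.1 x)
      have e2 : Real.sqrt (μ₂ x) * Real.sqrt (μ₂ x) = μ₂ x := Real.mul_self_sqrt (h₂.1 x)
      nlinarith [sq_nonneg (Real.sqrt (μ₁ x) - Real.sqrt (μ₂ x))]
    calc ∑ x : X, (Real.sqrt (μ₁ x) + Real.sqrt (μ₂ x)) ^ 2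
        ≤ ∑ x : X, 2 * (μ₁ x + μ₂ x) := Finset.sum_le_sum fun x _ => this x
      _ = 4 := by rw [← Finset.mul_sum, Finset.sum_add_distrib, h₁.2, h₂.2]; norm_num
  have hRKL0 : 0 ≤ RKL μ₁ μ₂ := RKL_nonneg h₁ h₂ hac
  have hsum0 : 0 ≤ ∑ x : X, |μ₁ x - μ₂ x| := Finset.sum_nonneg fun x _ => abs_nonneg _
  have hfin : (∑ x : X, |μ₁ x - μ₂ x|) ^ 2 ≤ 4 * RKL μ₁ μ₂ := by
    calc (∑ x : X, |μ₁ x - μ₂ x|) ^ 2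
        = (∑ x : X, |Real.sqrt (μ₁ x) - Real.sqrt (μ₂ x)| *
            (Real.sqrt (μ₁ x) + Real.sqrt (μ₂ x))) ^ 2 := by
          rw [Finset.sum_congr rfl fun x _ => hpt x]
      _ ≤ (∑ x : X, |Real.sqrt (μ₁ x) - Real.sqrt (μ₂ x)| ^ 2) *
            ∑ x : X, (Real.sqrt (μ₁ x) + Real.sqrt (μ₂ x)) ^ 2 := hCS
      _ ≤ RKL μ₁ μ₂ * 4 := by
          refine mul_le_mul hd2 hs2 (Finset.sum_nonneg fun x _ => sq_nonneg _) hRKL0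
      _ = 4 * RKL μ₁ μ₂ := by ring
  rw [DTV]
  have h4 : (1 / 2 : ℝ) * ∑ x : X, |μ₁ x - μ₂ x| ≤ (1 / 2) * (2 * Real.sqrt (RKL μ₁ μ₂)) := by
    refine mul_le_mul_of_nonneg_left ?_ (by norm_num)
    have : ∑ x : X, |μ₁ x - μ₂ x| ≤ Real.sqrt (4 * RKL μ₁ μ₂) :=
      (Real.le_sqrt (y := 4 * RKL μ₁ μ₂) hsum0 (by linarith)).mpr hfin
    calc ∑ x : X, |μ₁ x - μ₂ x| ≤ Real.sqrt (4 * RKL μ₁ μ₂) := this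
      _ = 2 * Real.sqrt (RKL μ₁ μ₂) := by
          rw [show (4 : ℝ) * RKL μ₁ μ₂ = 2 ^ 2 * RKL μ₁ μ₂ by ring, Real.sqrt_mul (by positivity),
            Real.sqrt_sq (by norm_num)]
  linarith

lemma ereal_sum_ne_bot {X : Type} (s : Finset X) (f : X → EReal) (h : ∀ x ∈ s, f x ≠ ⊥) :
    ∑ x ∈ s, f x ≠ ⊥ := by
  classical
  induction s using Finset.cons_induction with
  | empty => simp
  | cons a s ha ih =>
    rw [Finset.sum_cons]
    intro hc
    rcases EReal.add_eq_bot_iff.mp hc with h' | h'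
    · exact h a (Finset.mem_cons_self a s) h'
    · exact ih (fun x hx => h x (Finset.mem_cons_of_mem hx)) h'

lemma ereal_sum_eq_top {X : Type} (s : Finset X) (f : X → EReal) {x₀ : X} (hx₀ : x₀ ∈ s)
    (h0 : f x₀ = ⊤) (h : ∀ x ∈ s, f x ≠ ⊥) : ∑ x ∈ s, f x = ⊤ := by
  classical
  rw [← Finset.add_sum_erase s f hx₀, h0]
  exact EReal.top_add_of_ne_bot
    (ereal_sum_ne_bot _ _ fun x hx => h x (Finset.mem_of_mem_erase hx))

lemma DKL_ne_bot {X : Type} [Fintype X] (μ₁ μ₂ : X → ℝ) : DKL μ₁ μ₂ ≠ ⊥ := by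
  refine ereal_sum_ne_bot _ _ fun x _ => ?_
  split_ifs <;> simp [← EReal.coe_mul]

lemma DKL_eq_top {X : Type} [Fintype X] {μ₁ μ₂ : X → ℝ} {x₀ : X}
    (h2 : μ₂ x₀ = 0) (h1 : μ₁ x₀ ≠ 0) : DKL μ₁ μ₂ = ⊤ := by
  refine ereal_sum_eq_top _ _ (Finset.mem_univ x₀) ?_ fun x _ => ?_
  · rw [if_neg h1, if_pos h2]
  · split_ifs <;> simp [← EReal.coe_mul]

def erealHom : ℝ →+ EReal := ⟨⟨Real.toEReal, EReal.coe_zero⟩, EReal.coe_add⟩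

lemma ereal_coe_sum {X : Type} (s : Finset X) (g : X → ℝ) :
    ((∑ x ∈ s, g x : ℝ) : EReal) = ∑ x ∈ s, ((g x : ℝ) : EReal) :=
  map_sum erealHom g s

lemma DKL_eq_coe {X : Type} [Fintype X] {μ₁ μ₂ : X → ℝ}
    (hac : ∀ x, μ₂ x = 0 → μ₁ x = 0) :
    DKL μ₁ μ₂ = ((RKL μ₁ μ₂ : ℝ) : EReal) := by
  rw [DKL, RKL, ereal_coe_sum]
  refine Finset.sum_congr rfl fun x _ => ?_
  by_cases h1 : μ₁ x = 0
  · rw [if_pos h1, if_pos h1]; simp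
  · rw [if_neg h1, if_neg h1, if_neg (fun h2 => h1 (hac x h2))]



lemma coe_mul_ne_bot (c : ℝ) (hc : 0 ≤ c) (d : EReal) (hd : d ≠ ⊥) : (c : EReal) * d ≠ ⊥ := by
  induction d using EReal.rec with
  | bot => exact absurd rfl hd
  | coe x => rw [← EReal.coe_mul]; exact EReal.coe_ne_bot _
  | top =>
    rcases eq_or_lt_of_le hc with h | h
    · rw [← h]; simp
    · rw [EReal.coe_mul_top_of_pos h]; simp

theorem trust_region_stability (γ C Rmax : ℝ)
    (hγ0 : 0 ≤ γ) (hγ1 : γ < 1) (hC : 0 < C) (hR : 0 ≤ Rmax) :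
    ∃ K : ℝ, 0 < K ∧
      ∀ (S A : Type) [Fintype S] [Fintype A] [DecidableEq S] [DecidableEq A]
        [Nonempty S] [Nonempty A],
      ∀ (p : A → S → S → ℝ) (r : S → A → ℝ) (ν : S → ℝ),
        IsKernel p → (∀ s a, |r s a| ≤ Rmax) → IsPMF ν → (∀ s, C ≤ ν s) →
      ∀ (L : ℕ), 1 ≤ L →
      ∀ (πold : Fin L → S → A → ℝ) (πnew : S → A → ℝ),
        (∀ ℓ, IsPolicy (πold ℓ)) → IsPolicy πnew →
      ∀ (δ : ℝ), 0 < δ →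
      ∀ (m : Fin L → S → ℝ),
        (∀ ℓ, IsPMF (m ℓ)) → (∀ ℓ s, (1 - γ) * ν s ≤ m ℓ s) →
        (((1 / (L : ℝ) : ℝ) : EReal) *
            ∑ ℓ : Fin L, ∑ s : S, ((m ℓ s : ℝ) : EReal) * DKL (πold ℓ s) (πnew s)
          ≤ ((δ : ℝ) : EReal)) →
        |IntV p r γ ν πnew - (1 / (L : ℝ)) * ∑ ℓ : Fin L, IntV p r γ ν (πold ℓ)| ≤
          K * Real.sqrt δ := by
  have h1γ : (0:ℝ) < 1 - γ := by linarith
  refine ⟨2 * Rmax / ((1 - γ) ^ 2 * Real.sqrt ((1 - γ) * C)) + 1,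
    add_pos_of_nonneg_of_pos (div_nonneg (by linarith) (by positivity)) one_pos, ?_⟩
  intro S A _ _ _ _ _ _ p r ν hp hr hν hνC L hL πold πnew hπold hπnew δ hδ m hm hmν hKL
  have hLpos : (0:ℝ) < (L:ℝ) := by exact_mod_cast Nat.lt_of_lt_of_le Nat.zero_lt_one hL
  have hc0 : (0:ℝ) < (1 - γ) * C := mul_pos h1γ hC
  have hmpos : ∀ (ℓ : Fin L) (s : S), 0 < m ℓ s := fun ℓ s =>
    lt_of_lt_of_le (lt_of_lt_of_le hc0 (mul_le_mul_of_nonneg_left (hνC s) h1γ.le)) (hmν ℓ s)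
  -- absolute continuity
  have hac : ∀ (ℓ : Fin L) (s : S) (a : A), πnew s a = 0 → πold ℓ s a = 0 := by
    by_contra hcon
    push_neg at hcon
    obtain ⟨ℓ₀, s₀, a₀, hnew0, hold0⟩ := hcon
    have hterm_ne_bot : ∀ (ℓ : Fin L) (s : S),
        ((m ℓ s : ℝ) : EReal) * DKL (πold ℓ s) (πnew s) ≠ ⊥ :=
      fun ℓ s => coe_mul_ne_bot _ ((hm ℓ).1 s) _ (DKL_ne_bot _ _)
    have hinner : ∑ s : S, ((m ℓ₀ s : ℝ) : EReal) * DKL (πold ℓ₀ s) (πnew s) = ⊤ := by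
      refine ereal_sum_eq_top _ _ (Finset.mem_univ s₀) ?_ (fun s _ => hterm_ne_bot ℓ₀ s)
      rw [DKL_eq_top hnew0 hold0, EReal.coe_mul_top_of_pos (hmpos ℓ₀ s₀)]
    have houter : ∑ ℓ : Fin L, ∑ s : S,
        ((m ℓ s : ℝ) : EReal) * DKL (πold ℓ s) (πnew s) = ⊤ := by
      refine ereal_sum_eq_top _ _ (Finset.mem_univ ℓ₀) hinner (fun ℓ _ => ?_)
      exact ereal_sum_ne_bot _ _ fun s _ => hterm_ne_bot ℓ s
    rw [houter, EReal.coe_mul_top_of_pos (by positivity)] at hKL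
    exact (EReal.coe_ne_top δ) (top_le_iff.mp hKL)
  have hRKLnn : ∀ (ℓ : Fin L) (s : S), 0 ≤ RKL (πold ℓ s) (πnew s) :=
    fun ℓ s => RKL_nonneg (hπold ℓ s) (hπnew s) (hac ℓ s)
  -- realify the KL hypothesis
  set T : Fin L → ℝ := fun ℓ => ∑ s : S, m ℓ s * RKL (πold ℓ s) (πnew s) with hT
  have hTnn : ∀ ℓ : Fin L, 0 ≤ T ℓ := fun ℓ =>
    Finset.sum_nonneg fun s _ => mul_nonneg ((hm ℓ).1 s) (hRKLnn ℓ s)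
  have hKLr : (1 / (L:ℝ)) * ∑ ℓ : Fin L, T ℓ ≤ δ := by
    have hd : ∀ (ℓ : Fin L) (s : S), DKL (πold ℓ s) (πnew s)
        = ((RKL (πold ℓ s) (πnew s) : ℝ) : EReal) :=
      fun ℓ s => DKL_eq_coe (fun a h => hac ℓ s a h)
    have e : ((1 / (L : ℝ) : ℝ) : EReal) *
        ∑ ℓ : Fin L, ∑ s : S, ((m ℓ s : ℝ) : EReal) * DKL (πold ℓ s) (πnew s)
        = (((1 / (L:ℝ)) * ∑ ℓ : Fin L, T ℓ : ℝ) : EReal) := by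
      simp only [hd, ← EReal.coe_mul, ← ereal_coe_sum]
      rfl
    rw [e] at hKL
    exact EReal.coe_le_coe_iff.mp hKL
  -- per-state KL bound and total-variation bound
  have hRKLle : ∀ (ℓ : Fin L) (s : S),
      RKL (πold ℓ s) (πnew s) ≤ T ℓ / ((1 - γ) * C) := by
    intro ℓ s
    have h1 : (1 - γ) * C * RKL (πold ℓ s) (πnew s) ≤ m ℓ s * RKL (πold ℓ s) (πnew s) :=
      mul_le_mul_of_nonneg_right
        (le_trans (mul_le_mul_of_nonneg_left (hνC s) h1γ.le) (hmν ℓ s)) (hRKLnn ℓ s)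
    have h2 : m ℓ s * RKL (πold ℓ s) (πnew s) ≤ T ℓ :=
      Finset.single_le_sum (f := fun s : S => m ℓ s * RKL (πold ℓ s) (πnew s))
        (fun s _ => mul_nonneg ((hm ℓ).1 s) (hRKLnn ℓ s)) (Finset.mem_univ s)
    rw [le_div_iff₀ hc0]
    calc RKL (πold ℓ s) (πnew s) * ((1 - γ) * C)
        = (1 - γ) * C * RKL (πold ℓ s) (πnew s) := by ring
      _ ≤ T ℓ := h1.trans h2
  have hTV : ∀ (ℓ : Fin L) (s : S), ∑ a : A, |πnew s a - πold ℓ s a|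
      ≤ 2 * (Real.sqrt (T ℓ) / Real.sqrt ((1 - γ) * C)) := by
    intro ℓ s
    have h1 := DTV_le_sqrt_RKL (hπold ℓ s) (hπnew s) (hac ℓ s)
    have h2 : Real.sqrt (RKL (πold ℓ s) (πnew s)) ≤ Real.sqrt (T ℓ / ((1 - γ) * C)) :=
      Real.sqrt_le_sqrt (hRKLle ℓ s)
    have h3 : Real.sqrt (T ℓ / ((1 - γ) * C))
        = Real.sqrt (T ℓ) / Real.sqrt ((1 - γ) * C) := Real.sqrt_div (hTnn ℓ) _
    rw [DTV] at h1
    have h4 : ∑ a : A, |πold ℓ s a - πnew s a| = ∑ a : A, |πnew s a - πold ℓ s a| :=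
      Finset.sum_congr rfl fun a _ => abs_sub_comm _ _
    rw [h4] at h1
    rw [h3] at h2
    linarith
  -- per-policy value bound
  set c : ℝ := 2 * Rmax / ((1 - γ) ^ 2 * Real.sqrt ((1 - γ) * C)) with hc
  have hcnn : 0 ≤ c := div_nonneg (by linarith) (by positivity)
  have hVal : ∀ ℓ : Fin L, |IntV p r γ ν πnew - IntV p r γ ν (πold ℓ)|
      ≤ c * Real.sqrt (T ℓ) := by
    intro ℓ
    have hdiff := Vfun_diff_bound (π₁ := πnew) (π₂ := πold ℓ) hp hπnew (hπold ℓ) hr hγ0 hγ1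
      (2 * (Real.sqrt (T ℓ) / Real.sqrt ((1 - γ) * C))) (hTV ℓ)
    have hbd : |IntV p r γ ν πnew - IntV p r γ ν (πold ℓ)|
        ≤ 2 * (Real.sqrt (T ℓ) / Real.sqrt ((1 - γ) * C)) * Rmax / (1 - γ) ^ 2 := by
      rw [IntV, IntV, ← Finset.sum_sub_distrib]
      set B : ℝ := 2 * (Real.sqrt (T ℓ) / Real.sqrt ((1 - γ) * C)) * Rmax / (1 - γ) ^ 2 with hB
      have h1 : ∀ s : S, |ν s * Vfun p r γ πnew s - ν s * Vfun p r γ (πold ℓ) s| ≤ ν s * B := by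
        intro s
        rw [← mul_sub, abs_mul, abs_of_nonneg (hν.1 s)]
        exact mul_le_mul_of_nonneg_left (hdiff s) (hν.1 s)
      refine (Finset.abs_sum_le_sum_abs _ _).trans ?_
      calc ∑ s : S, |ν s * Vfun p r γ πnew s - ν s * Vfun p r γ (πold ℓ) s|
          ≤ ∑ s : S, ν s * B := Finset.sum_le_sum fun s _ => h1 s
        _ = (∑ s : S, ν s) * B := by rw [Finset.sum_mul]
        _ = B := by rw [hν.2, one_mul]
    refine hbd.trans (le_of_eq ?_)
    rw [hc]
    have hs0 : Real.sqrt ((1 - γ) * C) ≠ 0 := by positivity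
    field_simp
  -- average and Cauchy–Schwarz
  have e : IntV p r γ ν πnew - (1 / (L:ℝ)) * ∑ ℓ : Fin L, IntV p r γ ν (πold ℓ)
      = (1 / (L:ℝ)) * ∑ ℓ : Fin L, (IntV p r γ ν πnew - IntV p r γ ν (πold ℓ)) := by
    rw [Finset.sum_sub_distrib, Finset.sum_const, Finset.card_univ, Fintype.card_fin,
      nsmul_eq_mul]
    field_simp
  rw [e, abs_mul, abs_of_nonneg (by positivity : (0:ℝ) ≤ 1 / (L:ℝ))]
  have hstep : |∑ ℓ : Fin L, (IntV p r γ ν πnew - IntV p r γ ν (πold ℓ))|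
      ≤ c * ∑ ℓ : Fin L, Real.sqrt (T ℓ) := by
    calc |∑ ℓ : Fin L, (IntV p r γ ν πnew - IntV p r γ ν (πold ℓ))|
        ≤ ∑ ℓ : Fin L, |IntV p r γ ν πnew - IntV p r γ ν (πold ℓ)| :=
          Finset.abs_sum_le_sum_abs _ _
      _ ≤ ∑ ℓ : Fin L, c * Real.sqrt (T ℓ) := Finset.sum_le_sum fun ℓ _ => hVal ℓ
      _ = c * ∑ ℓ : Fin L, Real.sqrt (T ℓ) := by rw [Finset.mul_sum]
  have hCS : (1 / (L:ℝ)) * ∑ ℓ : Fin L, Real.sqrt (T ℓ) ≤ Real.sqrt δ := by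
    have h1 : (∑ ℓ : Fin L, Real.sqrt (T ℓ)) ^ 2 ≤ (L:ℝ) * ∑ ℓ : Fin L, T ℓ := by
      have h2 := sq_sum_le_card_mul_sum_sq (s := (Finset.univ : Finset (Fin L)))
        (f := fun ℓ : Fin L => Real.sqrt (T ℓ))
      have h3 : ∑ ℓ : Fin L, Real.sqrt (T ℓ) ^ 2 = ∑ ℓ : Fin L, T ℓ :=
        Finset.sum_congr rfl fun ℓ _ => Real.sq_sqrt (hTnn ℓ)
      rw [h3] at h2
      simpa [Finset.card_univ] using h2
    have hTs : (0:ℝ) ≤ ∑ ℓ : Fin L, T ℓ := Finset.sum_nonneg fun ℓ _ => hTnn ℓ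
    have h2 : ∑ ℓ : Fin L, Real.sqrt (T ℓ) ≤ Real.sqrt ((L:ℝ) * ∑ ℓ : Fin L, T ℓ) :=
      (Real.le_sqrt (y := (L:ℝ) * ∑ ℓ : Fin L, T ℓ)
        (Finset.sum_nonneg fun ℓ _ => Real.sqrt_nonneg _) (by positivity)).mpr h1
    calc (1 / (L:ℝ)) * ∑ ℓ : Fin L, Real.sqrt (T ℓ)
        ≤ (1 / (L:ℝ)) * Real.sqrt ((L:ℝ) * ∑ ℓ : Fin L, T ℓ) :=
          mul_le_mul_of_nonneg_left h2 (by positivity)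
      _ = Real.sqrt ((1 / (L:ℝ)) ^ 2 * ((L:ℝ) * ∑ ℓ : Fin L, T ℓ)) := by
          rw [Real.sqrt_mul (sq_nonneg _), Real.sqrt_sq (by positivity)]
      _ = Real.sqrt ((1 / (L:ℝ)) * ∑ ℓ : Fin L, T ℓ) := by
          congr 1
          field_simp
      _ ≤ Real.sqrt δ := Real.sqrt_le_sqrt hKLr
  calc (1 / (L:ℝ)) * |∑ ℓ : Fin L, (IntV p r γ ν πnew - IntV p r γ ν (πold ℓ))|
      ≤ (1 / (L:ℝ)) * (c * ∑ ℓ : Fin L, Real.sqrt (T ℓ)) :=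
        mul_le_mul_of_nonneg_left hstep (by positivity)
    _ = c * ((1 / (L:ℝ)) * ∑ ℓ : Fin L, Real.sqrt (T ℓ)) := by ring
    _ ≤ c * Real.sqrt δ := mul_le_mul_of_nonneg_left hCS hcnn
    _ ≤ (c + 1) * Real.sqrt δ :=
        mul_le_mul_of_nonneg_right (by linarith) (Real.sqrt_nonneg δ)



end VEPO
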